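/- Let G_* be a nonempty rooted graph with underlying graph G and chromatic number k, and let N ≥ M ≥ k. Then: (1) if X_G(x_1,…,x_M) is irreducible in ℚ[x_1,…,x_M], then X_{≠0}(G_*;x_0,…,x_M) is irreducible in ℚ[x_0,…,x_M]; (2) if X_G(x_1,…,x_M) is irreducible in ℚ[x_1,…,x_M], then X_G(x_1,…,x_N) is irreducible in ℚ[x_1,…,x_N]; (3) if X_{≠0}(G_*;x_0,…,x_M) is irreducible in ℚ[x_0,…,x_M], then X_{≠0}(G_*;x_0,…,x_N) is irreducible in ℚ[x_0,…,x_N]. -/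

import Mathlib

open MvPolynomial

attribute [local instance 10] Classical.propDecidable

/-- The finset of proper colorings of `G` with color set `Fin C`. -/
noncomputable def properColorings {V : Type} [Fintype V] (G : SimpleGraph V) (C : ℕ) :
    Finset (V → Fin C) :=
  Finset.univ.filter fun κ => ∀ u w, G.Adj u w → κ u ≠ κ w

/-- Chromatic symmetric polynomial of `G` with `C` colors, one variable per color. -/
noncomputable def XG {V : Type} [Fintype V] (G : SimpleGraph V) (C : ℕ) :
    MvPolynomial (Fin C) ℚ :=
  ∑ κ ∈ properColorings G C, ∏ v : V, X (κ v)

/-- `X_{≠0}(G_*; x_0,…,x_N)`: weighted sum over proper colorings with color set `{0,…,N}`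
in which the root `r` does not get color `0`. -/
noncomputable def Xne0 {V : Type} [Fintype V] (G : SimpleGraph V) (r : V) (N : ℕ) :
    MvPolynomial (Fin (N+1)) ℚ :=
  ∑ κ ∈ (properColorings G (N+1)).filter (fun κ => κ r ≠ 0), ∏ v : V, X (κ v)

namespace Aux


variable {σ : Type} 

/-- Embed `MvPolynomial σ ℚ` into polynomials in one extra variable tracking total degree. -/
noncomputable def ψ : MvPolynomial σ ℚ →ₐ[ℚ] Polynomial (MvPolynomial σ ℚ) :=
  aeval (fun i => Polynomial.C (X i) * Polynomial.X)

lemma psi_coeff (p : MvPolynomial σ ℚ) (k : ℕ) :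
    (ψ p).coeff k = homogeneousComponent k p := by
  have key : ∀ (d : σ →₀ ℕ) (a : ℚ), ψ (σ := σ) (monomial d a) =
      Polynomial.C (monomial d a) * Polynomial.X ^ (d.degree) := by
    intro d a
    rw [ψ, aeval_monomial, monomial_eq]
    rw [Finsupp.prod, Finsupp.prod]
    simp only [mul_pow, Finset.prod_mul_distrib, ← Polynomial.C_pow, ← map_prod,
      Finset.prod_pow_eq_pow_sum, Polynomial.algebraMap_apply, MvPolynomial.algebraMap_apply,
      Finsupp.degree]
    rw [Algebra.algebraMap_self_apply, map_mul]
    ring_nf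
    rfl
  conv_lhs => rw [p.as_sum]
  conv_rhs => rw [p.as_sum]
  rw [map_sum, Polynomial.finset_sum_coeff, map_sum]
  refine Finset.sum_congr rfl fun d hd => ?_
  rw [key, Polynomial.coeff_C_mul, Polynomial.coeff_X_pow,
    homogeneousComponent_of_mem (isHomogeneous_monomial _ rfl)]
  by_cases h : k = d.degree <;> simp [h]

lemma psi_coeff_totalDegree_ne_zero {p : MvPolynomial σ ℚ} (hp : p ≠ 0) :
    (ψ p).coeff p.totalDegree ≠ 0 := by
  rw [psi_coeff]
  have hne : p.support.Nonempty := Finset.nonempty_iff_ne_empty.mpr (fun h => hp (support_eq_empty.mp h))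
  obtain ⟨d, hd, hdeg⟩ := Finset.exists_mem_eq_sup _ hne (fun d : σ →₀ ℕ => d.sum fun _ e => e)
  intro h0
  have : coeff d (homogeneousComponent p.totalDegree p) = 0 := by rw [h0]; simp
  rw [coeff_homogeneousComponent] at this
  have hdd : d.degree = p.totalDegree := by
    rw [MvPolynomial.totalDegree, hdeg, Finsupp.degree]
    rfl
  rw [if_pos hdd] at this
  exact (mem_support_iff.mp hd) this

lemma psi_ne_zero {p : MvPolynomial σ ℚ} (hp : p ≠ 0) : ψ p ≠ 0 := fun h => by
  have := psi_coeff_totalDegree_ne_zero hp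
  rw [h] at this; simp at this

lemma psi_natDegree {p : MvPolynomial σ ℚ} (hp : p ≠ 0) :
    (ψ p).natDegree = p.totalDegree := by
  refine le_antisymm ?_ (Polynomial.le_natDegree_of_ne_zero (psi_coeff_totalDegree_ne_zero hp))
  rw [Polynomial.natDegree_le_iff_coeff_eq_zero]
  intro N hN
  rw [psi_coeff, homogeneousComponent_eq_zero _ _ hN]

lemma totalDegree_mul_eq {p q : MvPolynomial σ ℚ} (hp : p ≠ 0) (hq : q ≠ 0) :
    (p * q).totalDegree = p.totalDegree + q.totalDegree := by
  rw [← psi_natDegree (mul_ne_zero hp hq), map_mul,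
    Polynomial.natDegree_mul (psi_ne_zero hp) (psi_ne_zero hq),
    psi_natDegree hp, psi_natDegree hq]

lemma totalDegree_eq_zero_of_isUnit {p : MvPolynomial σ ℚ} (hp : IsUnit p) :
    p.totalDegree = 0 := by
  obtain ⟨q, hq⟩ := IsUnit.exists_right_inv hp
  have hp0 : p ≠ 0 := fun h => by simp [h] at hq
  have hq0 : q ≠ 0 := fun h => by simp [h] at hq
  have := totalDegree_mul_eq hp0 hq0
  rw [hq, totalDegree_one] at this
  omega

lemma isUnit_of_totalDegree_eq_zero {p : MvPolynomial σ ℚ} (hp : p ≠ 0)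
    (h : p.totalDegree = 0) : IsUnit p := by
  have hall := (totalDegree_eq_zero_iff σ p).mp h
  have : p = C (coeff 0 p) := by
    ext d
    by_cases hd : d = 0
    · simp [hd]
    · rw [coeff_C, if_neg (Ne.symm hd)]
      by_contra hc
      have hds : d ∈ p.support := mem_support_iff.mpr hc
      exact hd (Finsupp.ext fun x => hall d hds x)
  have hc0 : coeff 0 p ≠ 0 := fun hc => hp (by rw [this, hc, map_zero])
  rw [this]
  exact hc0.isUnit.map C

lemma totalDegree_aeval_le {τ : Type} (g : σ → MvPolynomial τ ℚ)
    (hg : ∀ i, (g i).totalDegree ≤ 1) (p : MvPolynomial σ ℚ) :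
    (aeval g p).totalDegree ≤ p.totalDegree := by
  conv_lhs => rw [p.as_sum]
  rw [map_sum]
  apply totalDegree_finsetSum_le
  intro d hd
  rw [aeval_monomial]
  refine le_trans (totalDegree_mul _ _) ?_
  have h1 : (algebraMap ℚ (MvPolynomial τ ℚ) (coeff d p)).totalDegree = 0 := totalDegree_C _
  rw [h1, zero_add]
  rw [Finsupp.prod]
  refine le_trans (totalDegree_finset_prod _ _) ?_
  refine le_trans (Finset.sum_le_sum fun i _ => le_trans (totalDegree_pow _ _)
    (Nat.mul_le_mul_left (d i) (hg i))) ?_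
  simp only [Nat.mul_one]
  exact le_totalDegree hd

/-- Key specialization lemma. -/
lemma irreducible_of_aeval {τ : Type} (g : σ → MvPolynomial τ ℚ)
    (hg : ∀ i, (g i).IsHomogeneous 1) {P : MvPolynomial σ ℚ} {n : ℕ}
    (hP : P.IsHomogeneous n) (hQ : Irreducible (aeval g P)) : Irreducible P := by
  set Q := aeval g P with hQdef
  have hQ0 : Q ≠ 0 := hQ.ne_zero
  have hP0 : P ≠ 0 := fun h => hQ0 (by rw [hQdef, h, map_zero])
  have hdegle : ∀ i, (g i).totalDegree ≤ 1 := fun i => (hg i).totalDegree_le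
  have hQhom : Q.IsHomogeneous n := by have h := hP.aeval g hg; rwa [one_mul] at h
  have hQdeg : Q.totalDegree = n := hQhom.totalDegree hQ0
  have hPdeg : P.totalDegree = n := hP.totalDegree hP0
  constructor
  · intro hu
    exact hQ.not_isUnit (hu.map (aeval g))
  · intro A B hAB
    have hA0 : A ≠ 0 := fun h => hP0 (by rw [hAB, h, zero_mul])
    have hB0 : B ≠ 0 := fun h => hP0 (by rw [hAB, h, mul_zero])
    have hQAB : Q = aeval g A * aeval g B := by rw [hQdef, hAB, map_mul]
    have hgA0 : aeval g A ≠ 0 := fun h => hQ0 (by rw [hQAB, h, zero_mul])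
    have hgB0 : aeval g B ≠ 0 := fun h => hQ0 (by rw [hQAB, h, mul_zero])
    have hsplit : A.totalDegree + B.totalDegree = n := by
      rw [← hPdeg, hAB, totalDegree_mul_eq hA0 hB0]
    rcases hQ.isUnit_or_isUnit hQAB with h | h
    · left
      have h0 : (aeval g A).totalDegree = 0 := totalDegree_eq_zero_of_isUnit h
      have : n ≤ B.totalDegree := by
        calc n = Q.totalDegree := hQdeg.symm
        _ = (aeval g A).totalDegree + (aeval g B).totalDegree := by
            rw [hQAB, totalDegree_mul_eq hgA0 hgB0]
        _ ≤ B.totalDegree := by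
            rw [h0, zero_add]; exact totalDegree_aeval_le g hdegle B
      exact isUnit_of_totalDegree_eq_zero hA0 (by omega)
    · right
      have h0 : (aeval g B).totalDegree = 0 := totalDegree_eq_zero_of_isUnit h
      have : n ≤ A.totalDegree := by
        calc n = Q.totalDegree := hQdeg.symm
        _ = (aeval g A).totalDegree + (aeval g B).totalDegree := by
            rw [hQAB, totalDegree_mul_eq hgA0 hgB0]
        _ ≤ A.totalDegree := by
            rw [h0, add_zero]; exact totalDegree_aeval_le g hdegle A
      exact isUnit_of_totalDegree_eq_zero hB0 (by omega)




/-- substitution map: send the variable `j` to `X i` if `e i = j`, else to `0`. -/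
noncomputable def sub {α β : Type} (e : α → β) (j : β) : MvPolynomial α ℚ :=
  if h : ∃ i, e i = j then X h.choose else 0

lemma sub_homog {α β : Type} (e : α → β) (j : β) : (sub e j).IsHomogeneous 1 := by
  rw [sub]; split
  · exact isHomogeneous_X _ _
  · exact isHomogeneous_zero _ _ _

lemma sub_eq_of_inj {α β : Type} {e : α → β} (he : Function.Injective e) (i : α) :
    sub e (e i) = X i := by
  rw [sub, dif_pos ⟨i, rfl⟩]
  congr 1
  exact he (⟨i, rfl⟩ : ∃ i', e i' = e i).choose_spec

lemma aeval_colorSum {V α β : Type} [Fintype V] {e : α → β} (he : Function.Injective e)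
    (S : Finset (V → β)) (T : Finset (V → α))
    (h1 : ∀ κ ∈ T, (e ∘ κ) ∈ S)
    (h2 : ∀ κ ∈ S, (∀ v, ∃ i, e i = κ v) → ∃ κ' ∈ T, e ∘ κ' = κ) :
    aeval (sub e) (∑ κ ∈ S, ∏ v : V, (X (κ v) : MvPolynomial β ℚ)) =
      ∑ κ ∈ T, ∏ v : V, (X (κ v) : MvPolynomial α ℚ) := by
  rw [map_sum]
  simp only [map_prod, aeval_X]
  have hinj : Function.Injective (fun κ' : V → α => e ∘ κ') := fun a b hab =>
    funext fun v => he (congrFun hab v)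
  have hsub : T.image (fun κ' => e ∘ κ') ⊆ S := by
    intro κ hκ
    obtain ⟨κ', hκ', rfl⟩ := Finset.mem_image.mp hκ
    exact h1 κ' hκ'
  rw [← Finset.sum_subset hsub]
  · rw [Finset.sum_image (fun a _ b _ h => hinj h)]
    refine Finset.sum_congr rfl fun κ' _ => ?_
    refine Finset.prod_congr rfl fun v _ => ?_
    exact sub_eq_of_inj he (κ' v)
  · intro κ hκS hκim
    by_cases hall : ∀ v, ∃ i, e i = κ v
    · obtain ⟨κ', hκ', hκeq⟩ := h2 κ hκS hall
      exact absurd (Finset.mem_image.mpr ⟨κ', hκ', hκeq⟩) hκim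
    · push_neg at hall
      obtain ⟨v, hv⟩ := hall
      refine Finset.prod_eq_zero (Finset.mem_univ v) ?_
      rw [sub, dif_neg]
      exact fun ⟨i, hi⟩ => hv i hi


lemma colorSum_homog {V α : Type} [Fintype V] (S : Finset (V → α)) :
    (∑ κ ∈ S, ∏ v : V, (X (κ v) : MvPolynomial α ℚ)).IsHomogeneous (Fintype.card V) := by
  refine IsHomogeneous.sum _ _ _ fun κ _ => ?_
  have := IsHomogeneous.prod Finset.univ (fun v => (X (κ v) : MvPolynomial α ℚ))
    (fun _ => 1) (fun v _ => isHomogeneous_X _ _)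
  simpa using this

lemma XG_homog {V : Type} [Fintype V] (G : SimpleGraph V) (C : ℕ) :
    (XG G C).IsHomogeneous (Fintype.card V) := colorSum_homog _

lemma Xne0_homog {V : Type} [Fintype V] (G : SimpleGraph V) (r : V) (N : ℕ) :
    (Xne0 G r N).IsHomogeneous (Fintype.card V) := colorSum_homog _

lemma mem_properColorings {V : Type} [Fintype V] {G : SimpleGraph V} {C : ℕ}
    {κ : V → Fin C} : κ ∈ properColorings G C ↔ ∀ u w, G.Adj u w → κ u ≠ κ w := by
  simp [properColorings]


end Aux

/-- Irreducibility relations for chromatic polynomials of a nonempty rooted graph `G_*`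
with chromatic number `k`, for `N ≥ M ≥ k`:
(1) irreducibility of `X_G` in `M` variables gives irreducibility of `X_{≠0}(G_*)` in
`M+1` variables; (2) and (3): irreducibility is preserved when passing from `M` to `N`
variables. -/
theorem stmt4 {V : Type} [Fintype V] [Nonempty V] (G : SimpleGraph V) (r : V)
    (k M N : ℕ) (hk : G.chromaticNumber = k) (hMk : k ≤ M) (hNM : M ≤ N) :
    (Irreducible (XG G M) → Irreducible (Xne0 G r M)) ∧
    (Irreducible (XG G M) → Irreducible (XG G N)) ∧
    (Irreducible (Xne0 G r M) → Irreducible (Xne0 G r N)) := by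
  refine ⟨?_, ?_, ?_⟩
  · -- (1)
    intro hXG
    have he : Function.Injective (Fin.succ : Fin M → Fin (M+1)) :=
      Fin.succ_injective M
    have key := Aux.aeval_colorSum (V := V) he
      ((properColorings G (M+1)).filter (fun κ => κ r ≠ 0)) (properColorings G M)
      ?_ ?_
    · refine Aux.irreducible_of_aeval (Aux.sub (Fin.succ : Fin M → Fin (M+1)))
        (fun j => Aux.sub_homog _ j) (Aux.Xne0_homog G r M) ?_
      rw [Xne0, key, ← XG]
      exact hXG
    · intro κ hκ
      rw [Finset.mem_filter]
      refine ⟨Aux.mem_properColorings.mpr fun u w hadj hne => ?_, ?_⟩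
      · exact (Aux.mem_properColorings.mp hκ) u w hadj (he hne)
      · exact Fin.succ_ne_zero _
    · intro κ hκ hall
      refine ⟨fun v => (hall v).choose, ?_, ?_⟩
      · refine Aux.mem_properColorings.mpr fun u w hadj hne => ?_
        refine (Aux.mem_properColorings.mp (Finset.mem_filter.mp hκ).1) u w hadj ?_
        rw [← (hall u).choose_spec, ← (hall w).choose_spec, hne]
      · exact funext fun v => (hall v).choose_spec
  · -- (2)
    intro hXG
    have he : Function.Injective (Fin.castLE hNM) := Fin.castLE_injective hNM
    have key := Aux.aeval_colorSum (V := V) he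
      (properColorings G N) (properColorings G M) ?_ ?_
    · refine Aux.irreducible_of_aeval (Aux.sub (Fin.castLE hNM))
        (fun j => Aux.sub_homog _ j) (Aux.XG_homog G N) ?_
      rw [XG, key, ← XG]
      exact hXG
    · intro κ hκ
      refine Aux.mem_properColorings.mpr fun u w hadj hne => ?_
      exact (Aux.mem_properColorings.mp hκ) u w hadj (he hne)
    · intro κ hκ hall
      refine ⟨fun v => (hall v).choose, ?_, ?_⟩
      · refine Aux.mem_properColorings.mpr fun u w hadj hne => ?_
        refine (Aux.mem_properColorings.mp hκ) u w hadj ?_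
        rw [← (hall u).choose_spec, ← (hall w).choose_spec, hne]
      · exact funext fun v => (hall v).choose_spec
  · -- (3)
    intro hXne
    have hMN1 : M + 1 ≤ N + 1 := Nat.succ_le_succ hNM
    have he : Function.Injective (Fin.castLE hMN1) := Fin.castLE_injective hMN1
    have key := Aux.aeval_colorSum (V := V) he
      ((properColorings G (N+1)).filter (fun κ => κ r ≠ 0))
      ((properColorings G (M+1)).filter (fun κ => κ r ≠ 0)) ?_ ?_
    · refine Aux.irreducible_of_aeval (Aux.sub (Fin.castLE hMN1))
        (fun j => Aux.sub_homog _ j) (Aux.Xne0_homog G r N) ?_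
      rw [Xne0, key, ← Xne0]
      exact hXne
    · intro κ hκ
      obtain ⟨hκp, hκr⟩ := Finset.mem_filter.mp hκ
      rw [Finset.mem_filter]
      refine ⟨Aux.mem_properColorings.mpr fun u w hadj hne => ?_, ?_⟩
      · exact (Aux.mem_properColorings.mp hκp) u w hadj (he hne)
      · intro h0
        exact hκr (he (h0.trans (Fin.ext (by simp))))
    · intro κ hκ hall
      obtain ⟨hκp, hκr⟩ := Finset.mem_filter.mp hκ
      refine ⟨fun v => (hall v).choose, ?_, ?_⟩
      · rw [Finset.mem_filter]
        constructor
        · refine Aux.mem_properColorings.mpr fun u w hadj hne => ?_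
          refine (Aux.mem_properColorings.mp hκp) u w hadj ?_
          rw [← (hall u).choose_spec, ← (hall w).choose_spec, hne]
        · intro h0
          apply hκr
          have h0' : (hall r).choose = (0 : Fin (M+1)) := h0
          rw [← (hall r).choose_spec, h0']
          ext
          simp
      · exact funext fun v => (hall v).choose_spec
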